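/- Let n ≥ 1 and λ_1,…,λ_n be pairwise distinct reals with λ_j > −1/2 for all j, and set a_{j,n} = (∏_{i=1}^n (λ_i + λ_j + 1)) / (∏_{i=1,i≠j}^n (λ_i − λ_j)). For t > 0, the n×n matrix m_t with entries (m_t)_{i,j} = t^{λ_i+λ_j+1}/(λ_i+λ_j+1) is invertible, and its inverse α_t has entries (α_t)_{i,j} = a_{i,n}·a_{j,n}·t^{−λ_i−λ_j−1}/(λ_i+λ_j+1). -/

import Mathlib

open MeasureTheory Filter Topology Matrix Finset


lemma muntz_sum_identity (n : ℕ) (L : Fin n → ℝ) (hL_inj : Function.Injective L)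
    (hpos : ∀ p q : Fin n, L p + L q + 1 ≠ 0)
    (a : Fin n → ℝ)
    (ha : ∀ j, a j = (∏ i, (L i + L j + 1)) / (∏ i ∈ Finset.univ.erase j, (L i - L j)))
    (i j : Fin n) :
    ∑ k, a k / ((L i + L k + 1) * (L k + L j + 1)) =
      (∏ l ∈ Finset.univ.erase j, (L l - L i)) / ∏ l, (L i + L l + 1) := by
  classical
  have hne : ∀ {p q : Fin n}, p ≠ q → L p - L q ≠ 0 := fun h =>
    sub_ne_zero.mpr fun e => h (hL_inj e)
  have hden : ∀ k : Fin n, (∏ l ∈ univ.erase k, (L l - L k)) ≠ 0 := fun k =>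
    Finset.prod_ne_zero_iff.mpr fun l hl => hne (Finset.mem_erase.mp hl).1
  have hak : ∀ k : Fin n, a k * ∏ l ∈ univ.erase k, (L l - L k) = ∏ l, (L l + L k + 1) := by
    intro k; rw [ha k, div_mul_cancel₀ _ (hden k)]
  set P : Polynomial ℝ := ∑ k : Fin n, Polynomial.C (a k / (L k + L j + 1)) *
      ∏ l ∈ univ.erase k, (Polynomial.X + Polynomial.C (L l + 1)) with hP
  set Q : Polynomial ℝ := ∏ l ∈ univ.erase j, (Polynomial.C (L l) - Polynomial.X) with hQ
  have hn0 : 0 < n := i.pos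
  have hdeg1 : ∀ (s : Finset (Fin n)) (f : Fin n → Polynomial ℝ), (∀ l ∈ s, (f l).degree ≤ 1) →
      (∏ l ∈ s, f l).degree ≤ (s.card : ℕ) := by
    intro s f hf
    calc (∏ l ∈ s, f l).degree ≤ ∑ l ∈ s, (f l).degree := Polynomial.degree_prod_le s f
      _ ≤ ∑ _l ∈ s, (1 : WithBot ℕ) := Finset.sum_le_sum hf
      _ = (s.card : ℕ) := by simp
  have hcard : (univ.erase j).card = n - 1 := by simp [Finset.card_erase_of_mem]
  have hltn : ((n - 1 : ℕ) : WithBot ℕ) < ((n : ℕ) : WithBot ℕ) := by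
    exact_mod_cast Nat.sub_lt hn0 one_pos
  have hPQ : P = Q := by
    apply Polynomial.eq_of_degrees_lt_of_eval_index_eq (v := fun k : Fin n => -(L k + 1))
        Finset.univ
    · intro p _ q _ h
      apply hL_inj
      simp only at h
      linarith [neg_injective h]
    · rw [Finset.card_univ, Fintype.card_fin]
      refine lt_of_le_of_lt ?_ hltn
      refine le_trans (Polynomial.degree_sum_le _ _) (Finset.sup_le fun k _ => ?_)
      calc (Polynomial.C (a k / (L k + L j + 1)) *
            ∏ l ∈ univ.erase k, (Polynomial.X + Polynomial.C (L l + 1))).degree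
          ≤ _ + _ := Polynomial.degree_mul_le _ _
        _ ≤ 0 + ((n - 1 : ℕ) : WithBot ℕ) := by
            refine add_le_add Polynomial.degree_C_le ?_
            have := hdeg1 (univ.erase k) _
              (fun l _ => le_of_eq (Polynomial.degree_X_add_C (L l + 1)))
            simpa [Finset.card_erase_of_mem] using this
        _ = ((n - 1 : ℕ) : WithBot ℕ) := zero_add _
    · rw [Finset.card_univ, Fintype.card_fin]
      refine lt_of_le_of_lt ?_ hltn
      have := hdeg1 (univ.erase j) (fun l => Polynomial.C (L l) - Polynomial.X)
        (fun l _ => le_trans (Polynomial.degree_sub_le _ _)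
          (max_le (le_trans Polynomial.degree_C_le (by norm_num)) (le_of_eq Polynomial.degree_X)))
      simpa [hcard] using this
    · intro k _
      have hQe : Q.eval (-(L k + 1)) = ∏ l ∈ univ.erase j, (L l + L k + 1) := by
        rw [hQ, Polynomial.eval_prod]
        exact Finset.prod_congr rfl fun l _ => by simp; ring
      rw [hQe, hP, Polynomial.eval_finset_sum, Finset.sum_eq_single k]
      · rw [Polynomial.eval_mul, Polynomial.eval_C, Polynomial.eval_prod]
        have h1 : ∏ l ∈ univ.erase k, Polynomial.eval (-(L k + 1))
            (Polynomial.X + Polynomial.C (L l + 1)) = ∏ l ∈ univ.erase k, (L l - L k) :=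
          Finset.prod_congr rfl fun l _ => by simp; ring
        rw [h1, div_mul_eq_mul_div, hak k,
          ← Finset.mul_prod_erase univ (fun l => L l + L k + 1) (Finset.mem_univ j),
          show L k + L j + 1 = L j + L k + 1 by ring,
          mul_div_cancel_left₀ _ (show L j + L k + 1 ≠ 0 by
            rw [show L j + L k + 1 = L k + L j + 1 by ring]; exact hpos k j)]
      · intro k' _ hk'
        rw [Polynomial.eval_mul, Polynomial.eval_prod]
        refine mul_eq_zero_of_right _ (Finset.prod_eq_zero
          (Finset.mem_erase.mpr ⟨hk'.symm, Finset.mem_univ k⟩) ?_)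
        simp only [Polynomial.eval_add, Polynomial.eval_X, Polynomial.eval_C]
        ring
      · intro h; exact absurd (Finset.mem_univ k) h
  have hId := congrArg (Polynomial.eval (L i)) hPQ
  rw [hP, hQ, Polynomial.eval_finset_sum] at hId
  simp only [Polynomial.eval_mul, Polynomial.eval_C, Polynomial.eval_prod, Polynomial.eval_add,
    Polynomial.eval_X, Polynomial.eval_sub] at hId
  have hD : (∏ l, (L i + L l + 1)) ≠ 0 := Finset.prod_ne_zero_iff.mpr fun l _ => hpos i l
  rw [eq_div_iff hD, Finset.sum_mul, ← hId]
  refine Finset.sum_congr rfl fun k _ => ?_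
  rw [show (∏ l, (L i + L l + 1)) = (L i + L k + 1) * ∏ l ∈ univ.erase k, (L i + L l + 1) from
    (Finset.mul_prod_erase univ _ (Finset.mem_univ k)).symm]
  have h1 := hpos i k
  have h2 := hpos k j
  have h3 : ∏ l ∈ univ.erase k, (L i + (L l + 1)) = ∏ l ∈ univ.erase k, (L i + L l + 1) :=
    Finset.prod_congr rfl fun l _ => by ring
  rw [h3]
  field_simp

/-- For pairwise distinct reals λ_1,…,λ_n with λ_j > −1/2, and
a_{j,n} = (∏_i (λ_i + λ_j + 1)) / (∏_{i≠j} (λ_i − λ_j)), the n×n matrix m_t with entries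
(m_t)_{i,j} = t^{λ_i+λ_j+1}/(λ_i+λ_j+1) is invertible for t > 0, and its inverse α_t has
entries (α_t)_{i,j} = a_{i,n}·a_{j,n}·t^{−λ_i−λ_j−1}/(λ_i+λ_j+1). -/
theorem muntz_gramian_inverse
    (n : ℕ) (hn : 1 ≤ n)
    (L : Fin n → ℝ)
    (hL_inj : Function.Injective L)
    (hL_half : ∀ j, -1/2 < L j)
    (a : Fin n → ℝ)
    (ha : ∀ j, a j = (∏ i, (L i + L j + 1)) / (∏ i ∈ Finset.univ.erase j, (L i - L j)))
    (t : ℝ) (ht : 0 < t)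
    (m : Matrix (Fin n) (Fin n) ℝ)
    (hm : m = Matrix.of fun i j => t ^ (L i + L j + 1) / (L i + L j + 1)) :
    IsUnit m ∧
    m⁻¹ = Matrix.of fun i j => a i * a j * t ^ (-(L i) - L j - 1) / (L i + L j + 1) := by
  classical
  have hpos : ∀ p q : Fin n, 0 < L p + L q + 1 := fun p q => by
    have := hL_half p; have := hL_half q; linarith
  have hpos' : ∀ p q : Fin n, L p + L q + 1 ≠ 0 := fun p q => (hpos p q).ne'
  set α : Matrix (Fin n) (Fin n) ℝ :=
    Matrix.of fun i j => a i * a j * t ^ (-(L i) - L j - 1) / (L i + L j + 1) with hα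
  have hmul : m * α = 1 := by
    ext i j
    rw [Matrix.mul_apply, hm, hα]
    simp only [Matrix.of_apply, Matrix.one_apply]
    have hterm : ∀ k : Fin n, t ^ (L i + L k + 1) / (L i + L k + 1) *
        (a k * a j * t ^ (-(L k) - L j - 1) / (L k + L j + 1)) =
        a j * t ^ (L i - L j) * (a k / ((L i + L k + 1) * (L k + L j + 1))) := by
      intro k
      have hp : t ^ (L i + L k + 1) * t ^ (-(L k) - L j - 1) = t ^ (L i - L j) := by
        rw [← Real.rpow_add ht]; ring_nf
      rw [← hp]
      have h1 := hpos' i k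
      have h2 := hpos' k j
      field_simp
    rw [Finset.sum_congr rfl fun k _ => hterm k, ← Finset.mul_sum,
      muntz_sum_identity n L hL_inj hpos' a ha i j]
    by_cases hij : i = j
    · subst hij
      simp only [if_pos]
      rw [sub_self, Real.rpow_zero, mul_one, ha i,
        show (∏ l, (L i + L l + 1)) = ∏ l, (L l + L i + 1) from
          Finset.prod_congr rfl fun l _ => by ring,
        div_mul_div_comm, mul_comm]
      exact div_self (mul_ne_zero
        (Finset.prod_ne_zero_iff.mpr fun l hl =>
          sub_ne_zero.mpr fun e => (Finset.mem_erase.mp hl).1 (hL_inj e))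
        (Finset.prod_ne_zero_iff.mpr fun l _ => hpos' l i))
    · simp only [if_neg hij]
      rw [Finset.prod_eq_zero (Finset.mem_erase.mpr ⟨hij, Finset.mem_univ i⟩) (show L i - L i = 0 from sub_self _),
        zero_div, mul_zero]
  have hinv : Invertible m := invertibleOfRightInverse m α hmul
  exact ⟨isUnit_of_invertible m, Matrix.inv_eq_right_inv hmul⟩
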